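/- For every integer p ≥ 2, the sum ∑_{k=1}^{p-1} csc²(kπ/p) equals (p² − 1)/3. -/

import Mathlib

open Real Finset

noncomputable def hirzE (p : ℕ) (d : ℤ) : ℂ := Complex.exp (2 * Real.pi * Complex.I * d / p)

lemma hirzE_add (p : ℕ) (a b : ℤ) : hirzE p (a + b) = hirzE p a * hirzE p b := by
  rw [hirzE, hirzE, hirzE, ← Complex.exp_add]
  congr 1
  push_cast
  ring

lemma hirzE_zero (p : ℕ) : hirzE p 0 = 1 := by simp [hirzE]

lemma hirzE_pow (p : ℕ) (d : ℤ) (n : ℕ) : hirzE p d ^ n = hirzE p (n * d) := by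
  rw [hirzE, hirzE, ← Complex.exp_nat_mul]
  congr 1
  push_cast
  ring

lemma hirzE_pow_p (p : ℕ) (hp : 0 < p) (d : ℤ) : hirzE p d ^ p = 1 := by
  rw [hirzE, ← Complex.exp_nat_mul]
  have hpc : (p : ℂ) ≠ 0 := by exact_mod_cast hp.ne'
  have harg : (p : ℂ) * (2 * Real.pi * Complex.I * d / p) = d * (2 * Real.pi * Complex.I) := by
    field_simp
  rw [harg, Complex.exp_int_mul_two_pi_mul_I]

lemma hirzE_ne_one (p : ℕ) (hp : 0 < p) (d : ℤ) (hd : ¬ (p : ℤ) ∣ d) : hirzE p d ≠ 1 := by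
  intro h
  rw [hirzE, Complex.exp_eq_one_iff] at h
  obtain ⟨n, hn⟩ := h
  apply hd
  refine ⟨n, ?_⟩
  have hπ : (Real.pi : ℂ) ≠ 0 := by exact_mod_cast Real.pi_ne_zero
  have hpc : (p : ℂ) ≠ 0 := by exact_mod_cast hp.ne'
  have hI := Complex.I_ne_zero
  have key : (d : ℂ) * (2 * Real.pi * Complex.I) = ((p:ℂ) * n) * (2 * Real.pi * Complex.I) := by
    field_simp at hn
    linear_combination (2 * Real.pi * Complex.I) * hn
  have : (d : ℂ) = p * n :=
    mul_right_cancel₀ (by simp [hπ, hI]) key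
  exact_mod_cast this

lemma sum_jx (x : ℂ) (n : ℕ) :
    (1 - x) * ∑ j ∈ range n, (j : ℂ) * x ^ j
      = (∑ j ∈ range n, x ^ j) - 1 - ((n : ℂ) - 1) * x ^ n := by
  induction n with
  | zero => simp
  | succ n ih =>
    rw [sum_range_succ, sum_range_succ]
    push_cast
    linear_combination ih

lemma sum_range_id_complex (n : ℕ) : ∑ j ∈ range n, (j : ℂ) = n * (n - 1) / 2 := by
  induction n with
  | zero => simp
  | succ n ih => rw [sum_range_succ, ih]; push_cast; ring

lemma sum_range_sq_complex (n : ℕ) :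
    ∑ j ∈ range n, (j : ℂ) ^ 2 = n * (n - 1) * (2 * n - 1) / 6 := by
  induction n with
  | zero => simp
  | succ n ih => rw [sum_range_succ, ih]; push_cast; ring

lemma hirz_geom_zero (p : ℕ) (hp : 0 < p) (d : ℤ) (hd : ¬ (p : ℤ) ∣ d) :
    ∑ j ∈ range p, hirzE p d ^ j = 0 := by
  rw [geom_sum_eq (hirzE_ne_one p hp d hd), hirzE_pow_p p hp d]
  simp

lemma hirz_keyF (p : ℕ) (hp : 0 < p) (d : ℤ) (hd : ¬ (p : ℤ) ∣ d) :
    (1 - hirzE p d) * ∑ j ∈ range p, (j : ℂ) * hirzE p d ^ j = -p := by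
  rw [sum_jx, hirz_geom_zero p hp d hd, hirzE_pow_p p hp d]
  ring

lemma hirz_not_dvd_neg (p : ℕ) (d : ℤ) (hd : ¬ (p : ℤ) ∣ d) : ¬ (p : ℤ) ∣ (-d) := by
  simpa using hd

lemma hirz_term (p : ℕ) (hp : 0 < p) (d : ℤ) (hd : ¬ (p : ℤ) ∣ d) :
    ((1 - hirzE p d) * (1 - hirzE p (-d)))⁻¹
      = (∑ j ∈ range p, (j : ℂ) * hirzE p d ^ j)
        * (∑ m ∈ range p, (m : ℂ) * hirzE p (-d) ^ m) / (p : ℂ) ^ 2 := by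
  have hpc : (p : ℂ) ≠ 0 := by exact_mod_cast hp.ne'
  have e1 := hirz_keyF p hp d hd
  have e2 := hirz_keyF p hp (-d) (hirz_not_dvd_neg p d hd)
  set F := ∑ j ∈ range p, (j : ℂ) * hirzE p d ^ j
  set G := ∑ m ∈ range p, (m : ℂ) * hirzE p (-d) ^ m
  have hprod : ((1 - hirzE p d) * (1 - hirzE p (-d))) * (F * G) = (p : ℂ) ^ 2 := by
    linear_combination ((1 - hirzE p (-d)) * G) * e1 + (-(p : ℂ)) * e2
  have hne : (1 - hirzE p d) * (1 - hirzE p (-d)) ≠ 0 := by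
    intro h0
    rw [h0, zero_mul] at hprod
    exact (pow_ne_zero 2 hpc) hprod.symm
  rw [eq_div_iff (pow_ne_zero 2 hpc), ← hprod, ← mul_assoc, inv_mul_cancel₀ hne, one_mul]

lemma hirz_F_mul (p : ℕ) (d : ℤ) :
    (∑ j ∈ range p, (j : ℂ) * hirzE p d ^ j)
      * (∑ m ∈ range p, (m : ℂ) * hirzE p (-d) ^ m)
    = ∑ j ∈ range p, ∑ m ∈ range p,
        (j : ℂ) * (m : ℂ) * hirzE p (d * ((j : ℤ) - m)) := by
  rw [Finset.sum_mul_sum]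
  refine Finset.sum_congr rfl fun j _ => Finset.sum_congr rfl fun m _ => ?_
  rw [hirzE_pow, hirzE_pow, ← mul_assoc, mul_assoc ((j:ℂ)) _ _, mul_comm (hirzE p _) ((m:ℂ)),
    ← mul_assoc, mul_assoc, ← hirzE_add]
  congr 2
  ring

lemma hirz_inner_sum (p : ℕ) (hp : 2 ≤ p) (j m : ℕ) (hj : j < p) (hm : m < p) :
    ∑ k ∈ Icc 1 (p - 1), hirzE p ((k : ℤ) * ((j : ℤ) - m))
      = if j = m then ((p : ℂ) - 1) else -1 := by
  have hp0 : 0 < p := by omega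
  by_cases h : j = m
  · simp only [h, if_pos]
    have : ∀ k ∈ Icc 1 (p - 1), hirzE p ((k : ℤ) * ((m : ℤ) - m)) = 1 := by
      intro k _; simp [hirzE_zero]
    rw [Finset.sum_congr rfl this, Finset.sum_const, Nat.card_Icc]
    have : p - 1 + 1 - 1 = p - 1 := by omega
    rw [this, nsmul_eq_mul, mul_one]
    push_cast [Nat.cast_sub (by omega : 1 ≤ p)]
    ring
  · simp only [h, if_neg, if_false]
    set d : ℤ := (j : ℤ) - m with hdd
    have hd : ¬ (p : ℤ) ∣ d := by
      rintro ⟨c, hc⟩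
      have h1 : d ≠ 0 := by omega
      have h2 : d < p := by omega
      have h3 : -(p : ℤ) < d := by omega
      rcases lt_trichotomy c 0 with hc0 | hc0 | hc0
      · have hb : (p : ℤ) * c ≤ -p := by nlinarith
        omega
      · subst hc0
        simp at hc
        omega
      · have hb : (p : ℤ) ≤ (p : ℤ) * c := by nlinarith
        omega
    have hrw : ∀ k ∈ Icc 1 (p - 1), hirzE p ((k : ℤ) * d) = hirzE p d ^ k := by
      intro k _; rw [hirzE_pow]
    rw [Finset.sum_congr rfl hrw]
    have hins : range p = insert 0 (Icc 1 (p - 1)) := by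
      ext a; simp only [Finset.mem_range, Finset.mem_insert, Finset.mem_Icc]; omega
    have hg := hirz_geom_zero p hp0 d hd
    rw [hins, Finset.sum_insert (by simp)] at hg
    simp only [pow_zero] at hg
    linear_combination hg

lemma hirz_complex_main (p : ℕ) (hp : 2 ≤ p) :
    ∑ k ∈ Icc 1 (p - 1), (4 : ℂ) * ((1 - hirzE p k) * (1 - hirzE p (-(k : ℤ))))⁻¹
      = ((p : ℂ) ^ 2 - 1) / 3 := by
  have hp0 : 0 < p := by omega
  have hpc : (p : ℂ) ≠ 0 := by exact_mod_cast hp0.ne'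
  have hstep : ∀ k ∈ Icc 1 (p - 1),
      (4 : ℂ) * ((1 - hirzE p k) * (1 - hirzE p (-(k : ℤ))))⁻¹
        = (4 / (p : ℂ) ^ 2) * ∑ j ∈ range p, ∑ m ∈ range p,
            (j : ℂ) * (m : ℂ) * hirzE p ((k : ℤ) * ((j : ℤ) - m)) := by
    intro k hk
    rw [Finset.mem_Icc] at hk
    have hdk : ¬ (p : ℤ) ∣ (k : ℤ) := by
      rintro ⟨c, hc⟩
      have h1 : (1 : ℤ) ≤ (k : ℤ) := by exact_mod_cast hk.1
      have h2 : (k : ℤ) ≤ (p : ℤ) - 1 := by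
        have := hk.2; omega
      rcases lt_trichotomy c 0 with hc0 | hc0 | hc0
      · have hb : (p : ℤ) * c ≤ -p := by nlinarith
        omega
      · subst hc0
        simp at hc
        omega
      · have hb : (p : ℤ) ≤ (p : ℤ) * c := by nlinarith
        omega
    rw [hirz_term p hp0 k hdk, hirz_F_mul p k]
    ring
  rw [Finset.sum_congr rfl hstep, ← Finset.mul_sum]
  have hswap : ∑ k ∈ Icc 1 (p - 1), ∑ j ∈ range p, ∑ m ∈ range p,
      (j : ℂ) * (m : ℂ) * hirzE p ((k : ℤ) * ((j : ℤ) - m))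
      = ∑ j ∈ range p, ∑ m ∈ range p,
          (j : ℂ) * (m : ℂ) * ∑ k ∈ Icc 1 (p - 1), hirzE p ((k : ℤ) * ((j : ℤ) - m)) := by
    rw [Finset.sum_comm]
    refine Finset.sum_congr rfl fun j _ => ?_
    rw [Finset.sum_comm]
    refine Finset.sum_congr rfl fun m _ => ?_
    rw [Finset.mul_sum]
  rw [hswap]
  have hinner : ∀ j ∈ range p, ∀ m ∈ range p,
      (j : ℂ) * (m : ℂ) * ∑ k ∈ Icc 1 (p - 1), hirzE p ((k : ℤ) * ((j : ℤ) - m))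
        = (if j = m then (j : ℂ) * (m : ℂ) * (p : ℂ) else 0) - (j : ℂ) * (m : ℂ) := by
    intro j hj m hm
    rw [hirz_inner_sum p hp j m (Finset.mem_range.mp hj) (Finset.mem_range.mp hm)]
    split_ifs <;> ring
  have hsum2 : ∑ j ∈ range p, ∑ m ∈ range p,
      (j : ℂ) * (m : ℂ) * ∑ k ∈ Icc 1 (p - 1), hirzE p ((k : ℤ) * ((j : ℤ) - m))
      = (p : ℂ) * (∑ j ∈ range p, (j : ℂ) ^ 2)
        - (∑ j ∈ range p, (j : ℂ)) * (∑ m ∈ range p, (m : ℂ)) := by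
    rw [Finset.sum_congr rfl fun j hj => Finset.sum_congr rfl fun m hm => hinner j hj m hm]
    rw [Finset.sum_congr rfl fun j (hj : j ∈ range p) => Finset.sum_sub_distrib _ _]
    rw [Finset.sum_sub_distrib]
    congr 1
    · rw [Finset.mul_sum]
      refine Finset.sum_congr rfl fun j hj => ?_
      rw [Finset.sum_ite_eq (range p) j (fun m => (j : ℂ) * (m : ℂ) * (p : ℂ)), if_pos hj]
      ring
    · rw [← Finset.sum_mul_sum]
  rw [hsum2, sum_range_id_complex, sum_range_sq_complex]
  field_simp
  ring

/-- Hirzebruch's trigonometric identity: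
for every integer `p ≥ 2`, `∑_{k=1}^{p-1} csc²(kπ/p) = (p² − 1)/3`. -/
theorem csc_sq_sum (p : ℕ) (hp : 2 ≤ p) :
    ∑ k ∈ Finset.Icc 1 (p - 1), (1 / Real.sin (k * Real.pi / p)) ^ 2
      = ((p : ℝ) ^ 2 - 1) / 3 := by
  have hp0 : 0 < p := by omega
  have hpr : (0 : ℝ) < p := by exact_mod_cast hp0
  apply Complex.ofReal_injective
  rw [Complex.ofReal_sum]
  have hterm : ∀ k ∈ Icc 1 (p - 1),
      ((((1 / Real.sin (k * Real.pi / p)) ^ 2 : ℝ)) : ℂ)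
        = (4 : ℂ) * ((1 - hirzE p k) * (1 - hirzE p (-(k : ℤ))))⁻¹ := by
    intro k hk
    rw [Finset.mem_Icc] at hk
    set θ : ℝ := k * Real.pi / p with hθ
    have hθpos : 0 < θ := by
      apply div_pos (mul_pos _ Real.pi_pos) hpr
      exact_mod_cast Nat.lt_of_lt_of_le Nat.zero_lt_one hk.1
    have hθlt : θ < Real.pi := by
      rw [hθ, div_lt_iff₀ hpr]
      have hkp : (k : ℝ) < p := by
        exact_mod_cast Nat.lt_of_le_of_lt hk.2 (by omega)
      nlinarith [Real.pi_pos]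
    have hs : Real.sin θ ≠ 0 := (Real.sin_pos_of_pos_of_lt_pi hθpos hθlt).ne'
    have hcos : 2 - 2 * Real.cos (2 * θ) = 4 * Real.sin θ ^ 2 := by
      rw [Real.cos_two_mul']
      nlinarith [Real.sin_sq_add_cos_sq θ]
    have hreal : (1 / Real.sin θ) ^ 2 = 4 / (2 - 2 * Real.cos (2 * θ)) := by
      rw [hcos]
      field_simp
    have hprod : (1 - hirzE p k) * (1 - hirzE p (-(k : ℤ)))
        = ((2 - 2 * Real.cos (2 * θ) : ℝ) : ℂ) := by
      have hxy : hirzE p k * hirzE p (-(k : ℤ)) = 1 := by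
        rw [← hirzE_add]; simp [hirzE_zero]
      have hx : hirzE p k = Complex.exp ((2 * θ : ℝ) * Complex.I) := by
        rw [hirzE, hθ]
        congr 1
        push_cast
        ring
      have hy : hirzE p (-(k : ℤ)) = Complex.exp (-((2 * θ : ℝ) * Complex.I)) := by
        rw [hirzE, hθ]
        congr 1
        push_cast
        ring
      have hc : hirzE p k + hirzE p (-(k : ℤ)) = 2 * Complex.cos (2 * θ : ℝ) := by
        rw [hx, hy, Complex.two_cos, neg_mul]
      have : (1 - hirzE p k) * (1 - hirzE p (-(k : ℤ)))
          = 2 - (hirzE p k + hirzE p (-(k : ℤ))) := by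
        linear_combination hxy
      rw [this, hc, ← Complex.ofReal_cos]
      push_cast
      ring
    rw [hreal, hprod]
    have hne : ((2 - 2 * Real.cos (2 * θ) : ℝ)) ≠ 0 := by
      rw [hcos]
      positivity
    rw [div_eq_mul_inv]
    push_cast
    ring
  rw [Finset.sum_congr rfl hterm, hirz_complex_main p hp]
  push_cast
  ring
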